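/- Let (Z, μ) be a measure space, n ≥ 1, q ≥ 1, let f_1, …, f_n : Z → ℝ be measurable with each product f_i·f_j μ-integrable, let g_1, …, g_n ∈ ℝ^q, e_1, …, e_n ∈ ℝ, and let Δ be a symmetric invertible q×q real matrix. Define the projected functions P f_i(z) = f_i(z) − g_iᵀ Δ⁻¹ (n⁻¹ ∑_{s=1}^n g_s f_s(z)) and the projected residuals e_i^{pro} = e_i − g_iᵀ Δ⁻¹ (n⁻¹ ∑_{s=1}^n g_s e_s). Then ∑_{i=1}^n ∑_{j=1}^n e_i e_j ∫_Z P f_i(z) · P f_j(z) dμ(z) = ∑_{i=1}^n ∑_{j=1}^n e_i^{pro} e_j^{pro} ∫_Z f_i(z) f_j(z) dμ(z). -/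
import Mathlib


open MeasureTheory Matrix

/-- Algebraic core of the closed-form representation of the double-projected
Cramér–von Mises statistic: the double sum of `e_i e_j ∫ 𝒫f_i 𝒫f_j dμ` equals the
double sum of projected residuals `e_i^{pro} e_j^{pro} ∫ f_i f_j dμ`. -/
theorem double_projection_closed_form
    {Z : Type*} [MeasurableSpace Z] (μ : Measure Z)
    (n q : ℕ) (hn : 1 ≤ n) (hq : 1 ≤ q)
    (f : Fin n → Z → ℝ) (hfmeas : ∀ i, Measurable (f i))
    (hfint : ∀ i j, Integrable (fun z => f i z * f j z) μ)
    (g : Fin n → Fin q → ℝ) (e : Fin n → ℝ)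
    (Δ : Matrix (Fin q) (Fin q) ℝ) (hΔsymm : Δ.IsSymm) (hΔinv : IsUnit Δ.det)
    (Pf : Fin n → Z → ℝ)
    (hPf : ∀ i z, Pf i z
      = f i z - g i ⬝ᵥ Δ⁻¹.mulVec (fun k => (n : ℝ)⁻¹ * ∑ s, g s k * f s z))
    (epro : Fin n → ℝ)
    (hepro : ∀ i, epro i
      = e i - g i ⬝ᵥ Δ⁻¹.mulVec (fun k => (n : ℝ)⁻¹ * ∑ s, g s k * e s)) :
    ∑ i, ∑ j, e i * e j * ∫ z, Pf i z * Pf j z ∂μ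
      = ∑ i, ∑ j, epro i * epro j * ∫ z, f i z * f j z ∂μ := by
  have hBsymm : (Δ⁻¹)ᵀ = Δ⁻¹ := by
    rw [Matrix.transpose_nonsing_inv, hΔsymm.eq]
  set M : Fin n → Fin n → ℝ := fun i s => (n : ℝ)⁻¹ * (g i ⬝ᵥ Δ⁻¹.mulVec (g s)) with hM
  set A : Fin n → Fin n → ℝ := fun i s => (if i = s then 1 else 0) - M i s with hA
  have swap3 : ∀ (F : Fin q → Fin q → Fin n → ℝ),
      ∑ k, ∑ l, ∑ s, F k l s = ∑ s, ∑ k, ∑ l, F k l s := by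
    intro F
    calc ∑ k, ∑ l, ∑ s, F k l s
        = ∑ k, ∑ s, ∑ l, F k l s := Finset.sum_congr rfl fun k _ => Finset.sum_comm
      _ = ∑ s, ∑ k, ∑ l, F k l s := Finset.sum_comm
  have key : ∀ (i : Fin n) (v : Fin n → ℝ),
      g i ⬝ᵥ Δ⁻¹.mulVec (fun k => (n : ℝ)⁻¹ * ∑ s, g s k * v s) = ∑ s, M i s * v s := by
    intro i v
    simp only [dotProduct, Matrix.mulVec, hM, Finset.mul_sum, Finset.sum_mul]
    rw [swap3]
    exact Finset.sum_congr rfl fun s _ => Finset.sum_congr rfl fun k _ =>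
      Finset.sum_congr rfl fun l _ => by ring
  have hMsymm : ∀ i s, M i s = M s i := by
    intro i s
    simp only [hM]
    congr 1
    rw [Matrix.dotProduct_mulVec, ← Matrix.mulVec_transpose, hBsymm, dotProduct_comm]
  have hAsymm : ∀ i s, A i s = A s i := by
    intro i s
    simp only [hA, hMsymm i s, eq_comm]
  have hPf' : ∀ i z, Pf i z = ∑ s, A i s * f s z := by
    intro i z
    rw [hPf, key i (fun s => f s z)]
    simp only [hA, sub_mul, ite_mul, one_mul, zero_mul, Finset.sum_sub_distrib,
      Finset.sum_ite_eq, Finset.mem_univ, if_true]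
  have hepro' : ∀ i, epro i = ∑ s, A i s * e s := by
    intro i
    rw [hepro, key i e]
    simp only [hA, sub_mul, ite_mul, one_mul, zero_mul, Finset.sum_sub_distrib,
      Finset.sum_ite_eq, Finset.mem_univ, if_true]
  have hint : ∀ i j, ∫ z, Pf i z * Pf j z ∂μ
      = ∑ s, ∑ t, A i s * A j t * ∫ z, f s z * f t z ∂μ := by
    intro i j
    have h1 : (fun z => Pf i z * Pf j z)
        = fun z => ∑ s, ∑ t, A i s * A j t * (f s z * f t z) := by
      funext z
      rw [hPf' i z, hPf' j z, Finset.sum_mul_sum]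
      exact Finset.sum_congr rfl fun s _ => Finset.sum_congr rfl fun t _ => by ring
    rw [h1, integral_finset_sum _ (fun s _ => integrable_finset_sum _
      (fun t _ => (hfint s t).const_mul _))]
    refine Finset.sum_congr rfl fun s _ => ?_
    rw [integral_finset_sum _ (fun t _ => (hfint s t).const_mul _)]
    exact Finset.sum_congr rfl fun t _ => integral_const_mul _ _
  calc ∑ i, ∑ j, e i * e j * ∫ z, Pf i z * Pf j z ∂μ
      = ∑ i, ∑ j, ∑ s, ∑ t,
          (e i * A i s) * (e j * A j t) * ∫ z, f s z * f t z ∂μ := by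
        refine Finset.sum_congr rfl fun i _ => Finset.sum_congr rfl fun j _ => ?_
        rw [hint i j, Finset.mul_sum]
        refine Finset.sum_congr rfl fun s _ => ?_
        rw [Finset.mul_sum]
        exact Finset.sum_congr rfl fun t _ => by ring
    _ = ∑ s, ∑ t, ∑ i, ∑ j,
          (e i * A i s) * (e j * A j t) * ∫ z, f s z * f t z ∂μ := by
        calc ∑ i, ∑ j, ∑ s, ∑ t,
              (e i * A i s) * (e j * A j t) * ∫ z, f s z * f t z ∂μ
            = ∑ i, ∑ s, ∑ j, ∑ t,
              (e i * A i s) * (e j * A j t) * ∫ z, f s z * f t z ∂μ :=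
              Finset.sum_congr rfl fun i _ => Finset.sum_comm
          _ = ∑ s, ∑ i, ∑ j, ∑ t,
              (e i * A i s) * (e j * A j t) * ∫ z, f s z * f t z ∂μ :=
              Finset.sum_comm
          _ = ∑ s, ∑ i, ∑ t, ∑ j,
              (e i * A i s) * (e j * A j t) * ∫ z, f s z * f t z ∂μ :=
              Finset.sum_congr rfl fun s _ => Finset.sum_congr rfl fun i _ =>
                Finset.sum_comm
          _ = ∑ s, ∑ t, ∑ i, ∑ j,
              (e i * A i s) * (e j * A j t) * ∫ z, f s z * f t z ∂μ :=
              Finset.sum_congr rfl fun s _ => Finset.sum_comm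
    _ = ∑ s, ∑ t, epro s * epro t * ∫ z, f s z * f t z ∂μ := by
        refine Finset.sum_congr rfl fun s _ => Finset.sum_congr rfl fun t _ => ?_
        rw [hepro' s, hepro' t, Finset.sum_mul_sum, Finset.sum_mul]
        refine Finset.sum_congr rfl fun i _ => ?_
        rw [Finset.sum_mul]
        refine Finset.sum_congr rfl fun j _ => ?_
        rw [hAsymm s i, hAsymm t j]
        ring
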